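/- Let F̂(z) = Mz + G(z) be a lift of a torus map satisfying the expanding-block assumption, with ‖A⁻¹‖ ≤ 1/K for some constant K > 1, and let Φ̂(z) = lim_{n→∞} A^{−n} P(F̂^n(z)). Let ‖G‖₀ := sup_{z∈ℝ^d} ‖G(z)‖. Then for every z ∈ ℝ^d, ‖Φ̂(z) − P z‖ ≤ ‖G‖₀ / (K − 1). -/

import Mathlib

open Filter Topology

noncomputable section

/-- Reinterpret a vector `Fin d → ℝ` as a point of Euclidean space `ℝ^d`. -/
def toEuc (d : ℕ) (v : Fin d → ℝ) : EuclideanSpace ℝ (Fin d) := WithLp.toLp 2 v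

/-- Projection onto the first `k` coordinates of `ℝ^d`. -/
def projP (d k : ℕ) (h : k ≤ d) (z : EuclideanSpace ℝ (Fin d)) :
    EuclideanSpace ℝ (Fin k) :=
  WithLp.toLp 2 (fun i => z (Fin.castLE h i))

lemma projP_add' (d k : ℕ) (h : k ≤ d) (a b : EuclideanSpace ℝ (Fin d)) :
    projP d k h (a + b) = projP d k h a + projP d k h b := rfl

lemma norm_projP_le' (d k : ℕ) (h : k ≤ d) (z : EuclideanSpace ℝ (Fin d)) :
    ‖projP d k h z‖ ≤ ‖z‖ := by
  rw [EuclideanSpace.norm_eq, EuclideanSpace.norm_eq]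
  apply Real.sqrt_le_sqrt
  have : (∑ i : Fin k, ‖projP d k h z i‖ ^ 2)
      = ∑ j ∈ Finset.univ.image (Fin.castLE h), ‖z j‖ ^ 2 := by
    rw [Finset.sum_image (fun a _ b _ hab => Fin.castLE_injective h hab)]
    rfl
  rw [this]
  exact Finset.sum_le_sum_of_subset_of_nonneg (Finset.subset_univ _)
    (fun j _ _ => by positivity)

lemma pow_apply_norm_le' (k : ℕ) (A : EuclideanSpace ℝ (Fin k) ≃L[ℝ] EuclideanSpace ℝ (Fin k))
    (r : ℝ)
    (hr : ‖(A.symm : EuclideanSpace ℝ (Fin k) →L[ℝ] EuclideanSpace ℝ (Fin k))‖ ≤ r)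
    (hr0 : 0 ≤ r) (n : ℕ) (x : EuclideanSpace ℝ (Fin k)) :
    ‖(A.symm ^ n) x‖ ≤ r ^ n * ‖x‖ := by
  induction n generalizing x with
  | zero => simp only [pow_zero, one_mul]; exact le_rfl
  | succ m ih =>
    have h1 : (A.symm ^ (m+1)) x = (A.symm ^ m) (A.symm x) := by rw [pow_succ]; rfl
    have h2 : ‖A.symm x‖ ≤ r * ‖x‖ :=
      le_trans ((A.symm : EuclideanSpace ℝ (Fin k) →L[ℝ] EuclideanSpace ℝ (Fin k)).le_opNorm x)
        (by gcongr)
    calc ‖(A.symm ^ (m+1)) x‖ = ‖(A.symm ^ m) (A.symm x)‖ := by rw [h1]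
      _ ≤ r ^ m * ‖A.symm x‖ := ih _
      _ ≤ r ^ m * (r * ‖x‖) := by gcongr
      _ = r ^ (m+1) * ‖x‖ := by ring

/--
Let `F̂(z) = Mz + G(z)` be a lift of a torus map satisfying the
expanding-block assumption, with `‖A⁻¹‖ ≤ 1/K` for some constant `K > 1`, and let
`Φ̂(z) = lim_{n→∞} A⁻ⁿ P(F̂ⁿ(z))`. Let `‖G‖₀ := sup_{z} ‖G(z)‖`. Then for every `z ∈ ℝ^d`,
`‖Φ̂(z) − P z‖ ≤ ‖G‖₀ / (K − 1)`.
-/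
theorem stmt3 (d k : ℕ) (hk : 1 ≤ k) (hkd : k ≤ d)
    (M : Matrix (Fin d) (Fin d) ℝ) (hMint : ∀ i j, ∃ n : ℤ, M i j = (n : ℝ))
    (G : EuclideanSpace ℝ (Fin d) → EuclideanSpace ℝ (Fin d))
    (hGcont : Continuous G) (hGbdd : ∃ C, ∀ z, ‖G z‖ ≤ C)
    (hGper : ∀ (z : EuclideanSpace ℝ (Fin d)) (p : Fin d → ℤ),
      G (z + toEuc d fun i => (p i : ℝ)) = G z)
    (F : EuclideanSpace ℝ (Fin d) → EuclideanSpace ℝ (Fin d))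
    (hF : ∀ z, F z = toEuc d (M.mulVec z) + G z)
    (A : EuclideanSpace ℝ (Fin k) ≃L[ℝ] EuclideanSpace ℝ (Fin k))
    (hPM : ∀ z : EuclideanSpace ℝ (Fin d),
      projP d k hkd (toEuc d (M.mulVec z)) = A (projP d k hkd z))
    (hA : ‖(A.symm : EuclideanSpace ℝ (Fin k) →L[ℝ] EuclideanSpace ℝ (Fin k))‖ < 1)
    (K : ℝ) (hK : 1 < K)
    (hAK : ‖(A.symm : EuclideanSpace ℝ (Fin k) →L[ℝ] EuclideanSpace ℝ (Fin k))‖ ≤ 1 / K)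
    (Φ : EuclideanSpace ℝ (Fin d) → EuclideanSpace ℝ (Fin k))
    (hΦ : ∀ z, Tendsto (fun n : ℕ => (A.symm ^ n) (projP d k hkd (F^[n] z)))
      atTop (𝓝 (Φ z))) :
    ∀ z : EuclideanSpace ℝ (Fin d),
      ‖Φ z - projP d k hkd z‖ ≤ (⨆ w : EuclideanSpace ℝ (Fin d), ‖G w‖) / (K - 1) := by
  intro z
  obtain ⟨C0, hC0⟩ := hGbdd
  set C : ℝ := ⨆ w : EuclideanSpace ℝ (Fin d), ‖G w‖ with hCdef
  have hbdd : BddAbove (Set.range fun w : EuclideanSpace ℝ (Fin d) => ‖G w‖) :=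
    ⟨C0, by rintro _ ⟨w, rfl⟩; exact hC0 w⟩
  have hCge : ∀ w, ‖G w‖ ≤ C := fun w => le_ciSup hbdd w
  have hCnn : 0 ≤ C := le_trans (norm_nonneg _) (hCge 0)
  have hK0 : (0:ℝ) < K := lt_trans one_pos hK
  have hr0 : (0:ℝ) ≤ 1 / K := by positivity
  set u : ℕ → EuclideanSpace ℝ (Fin k) :=
    fun n => (A.symm ^ n) (projP d k hkd (F^[n] z)) with hu
  -- one step
  have hstep : ∀ n : ℕ, ‖u (n+1) - u n‖ ≤ C * (1/K) ^ (n+1) := by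
    intro n
    have hP : projP d k hkd (F (F^[n] z))
        = A (projP d k hkd (F^[n] z)) + projP d k hkd (G (F^[n] z)) := by
      rw [hF, projP_add', hPM]
    have hdiff : u (n+1) - u n = (A.symm ^ (n+1)) (projP d k hkd (G (F^[n] z))) := by
      have h1 : u (n+1) = (A.symm ^ n) (A.symm (projP d k hkd (F (F^[n] z)))) := by
        simp only [hu, Function.iterate_succ_apply']
        rw [pow_succ]
        rfl
      have h2 : (A.symm ^ (n+1)) (projP d k hkd (G (F^[n] z)))
          = (A.symm ^ n) (A.symm (projP d k hkd (G (F^[n] z)))) := by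
        rw [pow_succ]; rfl
      rw [h1, hP, map_add, A.symm_apply_apply, map_add, h2, hu]
      abel
    rw [hdiff]
    calc ‖(A.symm ^ (n+1)) (projP d k hkd (G (F^[n] z)))‖
        ≤ (1/K) ^ (n+1) * ‖projP d k hkd (G (F^[n] z))‖ :=
          pow_apply_norm_le' k A (1/K) hAK hr0 (n+1) _
      _ ≤ (1/K) ^ (n+1) * C := by
          gcongr
          exact le_trans (norm_projP_le' d k hkd _) (hCge _)
      _ = C * (1/K) ^ (n+1) := by ring
  -- partial sums bound
  have hsum : ∀ n : ℕ, ‖u n - u 0‖ ≤ C / (K-1) * (1 - (1/K) ^ n) := by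
    intro n
    induction n with
    | zero => simp
    | succ m ih =>
      have : u (m+1) - u 0 = (u (m+1) - u m) + (u m - u 0) := by abel
      rw [this]
      have hKm : (0:ℝ) < (1/K) ^ m := by positivity
      calc ‖(u (m+1) - u m) + (u m - u 0)‖
          ≤ ‖u (m+1) - u m‖ + ‖u m - u 0‖ := norm_add_le _ _
        _ ≤ C * (1/K) ^ (m+1) + C / (K-1) * (1 - (1/K) ^ m) := by gcongr; exact hstep m
        _ = C / (K-1) * (1 - (1/K) ^ (m+1)) := by
            have hK1 : K - 1 ≠ 0 := by linarith
            have hKne : K ≠ 0 := ne_of_gt hK0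
            linear_combination (-(C * (1/K) ^ m / K)) * mul_inv_cancel₀ hK1
              + (C * (1/K) ^ m * (K-1)⁻¹) * mul_inv_cancel₀ hKne
      done
  -- take the limit
  have hlim : Tendsto (fun n => ‖u n - u 0‖) atTop (𝓝 ‖Φ z - u 0‖) :=
    ((hΦ z).sub tendsto_const_nhds).norm
  have hle : ‖Φ z - u 0‖ ≤ C / (K-1) := by
    apply le_of_tendsto hlim
    filter_upwards with n
    calc ‖u n - u 0‖ ≤ C / (K-1) * (1 - (1/K) ^ n) := hsum n
      _ ≤ C / (K-1) * 1 := by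
          have hden : (0:ℝ) < K - 1 := by linarith
          have h1 : (0:ℝ) ≤ (1/K) ^ n := by positivity
          gcongr
          linarith
      _ = C / (K-1) := mul_one _
  have hu0 : u 0 = projP d k hkd z := rfl
  rwa [hu0] at hle
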